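/- Every graph with at most two moplexes is a cocomparability graph, i.e., the complement of a 2-moplex graph admits a transitive orientation. -/

import Mathlib

open SimpleGraph

namespace MoplexPaper

variable {V : Type*}

/-- Reachability in `G - S`: a walk from `u` to `v` all of whose vertices avoid `S`. -/
def ReachOutside (G : SimpleGraph V) (S : Set V) (u v : V) : Prop :=
  ∃ p : G.Walk u v, ∀ x ∈ p.support, x ∉ S

/-- `S` is a `u,v`-separator. -/
def IsSeparator (G : SimpleGraph V) (u v : V) (S : Set V) : Prop :=
  ¬ G.Adj u v ∧ u ∉ S ∧ v ∉ S ∧ ¬ ReachOutside G S u v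

/-- `S` is a minimal `u,v`-separator. -/
def IsMinSeparator (G : SimpleGraph V) (u v : V) (S : Set V) : Prop :=
  IsSeparator G u v S ∧ ∀ T ⊂ S, ¬ IsSeparator G u v T

/-- `S` is a minimal separator of `G`. -/
def IsMinimalSeparator (G : SimpleGraph V) (S : Set V) : Prop :=
  ∃ u v, u ≠ v ∧ IsMinSeparator G u v S

/-- The (open) neighbourhood of a set of vertices. -/
def setNbhd (G : SimpleGraph V) (X : Set V) : Set V :=
  {v | v ∉ X ∧ ∃ x ∈ X, G.Adj v x}

/-- The closed neighbourhood of a vertex. -/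
def closedNbhd (G : SimpleGraph V) (v : V) : Set V :=
  insert v (G.neighborSet v)

/-- `M` is a module of `G`. -/
def IsModule (G : SimpleGraph V) (M : Set V) : Prop :=
  ∀ v ∉ M, (∀ x ∈ M, G.Adj v x) ∨ (∀ x ∈ M, ¬ G.Adj v x)

/-- `M` is a clique module of `G`. -/
def IsCliqueModule (G : SimpleGraph V) (M : Set V) : Prop :=
  G.IsClique M ∧ IsModule G M

/-- `X` is a moplex of `G`: an inclusion-maximal clique module whose
neighbourhood is empty or a minimal separator. -/
def IsMoplex (G : SimpleGraph V) (X : Set V) : Prop :=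
  X.Nonempty ∧ IsCliqueModule G X ∧
  (∀ Y, X ⊆ Y → IsCliqueModule G Y → Y = X) ∧
  (setNbhd G X = ∅ ∨ IsMinimalSeparator G (setNbhd G X))

/-- A vertex is moplicial if it belongs to a moplex. -/
def Moplicial (G : SimpleGraph V) (v : V) : Prop := ∃ X, IsMoplex G X ∧ v ∈ X

/-- An extension of `v`: an induced `P₃` with midpoint `v`. -/
def IsExtension (G : SimpleGraph V) (v a b : V) : Prop :=
  a ≠ b ∧ G.Adj v a ∧ G.Adj v b ∧ ¬ G.Adj a b

/-- A cycle is induced if the only edges of `G` among its vertices are its own edges. -/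
def IsInducedCycle (G : SimpleGraph V) {w : V} (c : G.Walk w w) : Prop :=
  c.IsCycle ∧ ∀ x ∈ c.support, ∀ y ∈ c.support, G.Adj x y → s(x, y) ∈ c.edges

/-- `v` is avoidable: every extension of `v` is contained in an induced cycle. -/
def Avoidable (G : SimpleGraph V) (v : V) : Prop :=
  ∀ a b, IsExtension G v a b →
    ∃ (w : V) (c : G.Walk w w), IsInducedCycle G c ∧
      a ∈ c.support ∧ v ∈ c.support ∧ b ∈ c.support

/-- `A` is an asteroidal set of `G`. -/
def IsAsteroidal (G : SimpleGraph V) (A : Set V) : Prop :=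
  ∀ a ∈ A, ∀ x ∈ A, ∀ y ∈ A, x ≠ a → y ≠ a →
    ReachOutside G (closedNbhd G a) x y

/-- `G` is AT-free: it has no asteroidal triple. -/
def ATFree (G : SimpleGraph V) : Prop :=
  ¬ ∃ A : Set V, IsAsteroidal G A ∧ A.ncard = 3

/-- `G` has exactly the two moplexes `U` and `W`. -/
def HasExactlyTwoMoplexes (G : SimpleGraph V) (U W : Set V) : Prop :=
  IsMoplex G U ∧ IsMoplex G W ∧ U ≠ W ∧ ∀ X, IsMoplex G X → X = U ∨ X = W

/-- `G` is not complete. -/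
def NonComplete (G : SimpleGraph V) : Prop :=
  ∃ x y : V, x ≠ y ∧ ¬ G.Adj x y

/-- `G` is a cocomparability graph: the non-edges of `G` admit a transitive orientation. -/
def HasTransitiveComplementOrientation (G : SimpleGraph V) : Prop :=
  ∃ r : V → V → Prop, Transitive r ∧
    (∀ x y, r x y → x ≠ y ∧ ¬ G.Adj x y) ∧
    (∀ x y, x ≠ y → ¬ G.Adj x y → (r x y ↔ ¬ r y x))


/-! ### Infrastructure: reachability as reflexive-transitive closure -/

section Infra

variable {G : SimpleGraph V}

/-- One step of a walk avoiding `S`. -/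
def Stp (G : SimpleGraph V) (S : Set V) (a b : V) : Prop :=
  G.Adj a b ∧ a ∉ S ∧ b ∉ S

/-- Reachability avoiding `S`, chain form. -/
def MR (G : SimpleGraph V) (S : Set V) (x y : V) : Prop :=
  x ∉ S ∧ y ∉ S ∧ Relation.ReflTransGen (Stp G S) x y

lemma stp_symm {S : Set V} : Symmetric (Stp G S) :=
  fun _ _ h => ⟨h.1.symm, h.2.2, h.2.1⟩

lemma MR.refl {S : Set V} {x : V} (hx : x ∉ S) : MR G S x x :=
  ⟨hx, hx, Relation.ReflTransGen.refl⟩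

lemma MR.symm {S : Set V} {x y : V} (h : MR G S x y) : MR G S y x :=
  ⟨h.2.1, h.1, @Std.Symm.symm _ _ (@Relation.ReflTransGen.stdSymm _ (Stp G S) ⟨fun a b hab => stp_symm hab⟩) _ _ h.2.2⟩

lemma MR.trans {S : Set V} {x y z : V} (h : MR G S x y) (h' : MR G S y z) :
    MR G S x z :=
  ⟨h.1, h'.2.1, h.2.2.trans h'.2.2⟩

lemma MR.of_adj {S : Set V} {x y : V} (hadj : G.Adj x y) (hx : x ∉ S) (hy : y ∉ S) :
    MR G S x y :=
  ⟨hx, hy, Relation.ReflTransGen.single ⟨hadj, hx, hy⟩⟩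

lemma MR.mono {S T : Set V} {x y : V} (hTS : T ⊆ S) (h : MR G S x y) : MR G T x y := by
  refine ⟨fun hx => h.1 (hTS hx), fun hy => h.2.1 (hTS hy), ?_⟩
  exact Relation.ReflTransGen.mono (p := Stp G T) (fun a b (hab : Stp G S a b) => (⟨hab.1, fun ha => hab.2.1 (hTS ha), fun hb => hab.2.2 (hTS hb)⟩ : Stp G T a b)) _ _ h.2.2

/-- Transfer of reachability to another avoided set: if every vertex reachable
(avoiding `S`) from `y` avoids `T`, then `x` reaches `y` avoiding `T`. -/
lemma MR.transfer {S T : Set V} {x y : V} (h : MR G S x y)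
    (hT : ∀ v, MR G S v y → v ∉ T) : MR G T x y := by
  obtain ⟨hx, hy, hchain⟩ := h
  refine ⟨hT x ⟨hx, hy, hchain⟩, hT y (MR.refl hy), ?_⟩
  clear hx
  induction hchain using Relation.ReflTransGen.head_induction_on with
  | refl => exact Relation.ReflTransGen.refl
  | @head a c hstep hchain ih =>
    have hac : MR G S c y := ⟨hstep.2.2, hy, hchain⟩
    have haa : MR G S a y := (MR.of_adj hstep.1 hstep.2.1 hstep.2.2).trans hac
    exact Relation.ReflTransGen.head ⟨hstep.1, hT a haa, hT c hac⟩ ih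

/-- From `MR` to a walk-based reachability. -/
lemma MR.reachOutside {S : Set V} {x y : V} (h : MR G S x y) : ReachOutside G S x y := by
  obtain ⟨hx, hy, hchain⟩ := h
  clear hx
  induction hchain using Relation.ReflTransGen.head_induction_on with
  | refl => exact ⟨SimpleGraph.Walk.nil, by simpa using hy⟩
  | @head a c hstep hchain ih =>
    obtain ⟨p, hp⟩ := ih
    refine ⟨SimpleGraph.Walk.cons hstep.1 p, ?_⟩
    intro v hv
    rw [SimpleGraph.Walk.support_cons, List.mem_cons] at hv
    rcases hv with h | h
    · exact h ▸ hstep.2.1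
    · exact hp v h

lemma reachOutside_iff_MR {S : Set V} {x y : V} :
    ReachOutside G S x y ↔ MR G S x y := by
  constructor
  · rintro ⟨p, hp⟩
    induction p with
    | nil => exact MR.refl (hp _ (by simp))
    | cons hadj q ih =>
      rename_i a b c
      have hb : ∀ v ∈ q.support, v ∉ S := fun v hv => hp v (by simp [hv])
      have ha : a ∉ S := hp a (by simp)
      exact (MR.of_adj hadj ha (hb _ q.start_mem_support)).trans (ih hb)
  · exact MR.reachOutside

end Infra

/-! ### Separator basics -/

section Seps

variable {G : SimpleGraph V}

lemma isSeparator_iff {S : Set V} {x y : V} :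
    IsSeparator G x y S ↔ ¬G.Adj x y ∧ x ∉ S ∧ y ∉ S ∧ ¬ MR G S x y := by
  unfold IsSeparator
  rw [reachOutside_iff_MR]

lemma exists_separator {x y : V} (hxy : x ≠ y) (hadj : ¬ G.Adj x y) :
    IsSeparator G x y {v | v ≠ x ∧ v ≠ y} := by
  rw [isSeparator_iff]
  refine ⟨hadj, by simp, by simp, ?_⟩
  rintro ⟨hx, hy, hchain⟩
  rcases hchain.cases_head with h | ⟨c, hstep, _⟩
  · exact hxy h
  · have hc : c = x ∨ c = y := by
      by_contra hc
      push_neg at hc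
      exact hstep.2.2 ⟨hc.1, hc.2⟩
    rcases hc with rfl | rfl
    · exact G.irrefl hstep.1
    · exact hadj hstep.1

lemma exists_minSeparator_subset [Fintype V] {x y : V} {S₁ : Set V}
    (h : IsSeparator G x y S₁) : ∃ S, S ⊆ S₁ ∧ IsMinSeparator G x y S := by
  classical
  obtain ⟨n, hn⟩ : ∃ n, S₁.ncard = n := ⟨_, rfl⟩
  induction n using Nat.strong_induction_on generalizing S₁ with
  | _ n ih =>
    by_cases hmin : ∀ T, T ⊂ S₁ → ¬ IsSeparator G x y T
    · exact ⟨S₁, subset_rfl, h, hmin⟩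
    · push_neg at hmin
      obtain ⟨T, hT, hTsep⟩ := hmin
      have hlt : T.ncard < S₁.ncard := Set.ncard_lt_ncard hT (Set.toFinite _)
      obtain ⟨S, hS, hSmin⟩ := ih T.ncard (hn ▸ hlt) hTsep rfl
      exact ⟨S, hS.trans hT.subset, hSmin⟩

lemma exists_minSep_pair [Fintype V] {x y : V} (hxy : x ≠ y) (hadj : ¬ G.Adj x y) :
    ∃ S, IsMinSeparator G x y S := by
  obtain ⟨S, _, hS⟩ := exists_minSeparator_subset (exists_separator hxy hadj)
  exact ⟨S, hS⟩

lemma isMinSeparator.symm {x y : V} {S : Set V} (h : IsMinSeparator G x y S) :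
    IsMinSeparator G y x S := by
  have flip : ∀ T (u v : V), IsSeparator G u v T → IsSeparator G v u T := by
    rintro T u v hT
    rw [isSeparator_iff] at hT ⊢
    exact ⟨fun a => hT.1 a.symm, hT.2.2.1, hT.2.1, fun a => hT.2.2.2 a.symm⟩
  exact ⟨flip _ _ _ h.1, fun T hT hTsep => h.2 T hT (flip _ _ _ hTsep)⟩

/-- Leaving a set `K` closed under steps avoiding `M` is impossible. -/
lemma mr_stay {K M : Set V} {k₀ t : V} (hk : k₀ ∈ K)
    (hcl : ∀ k ∈ K, ∀ v, G.Adj k v → v ∉ M → v ∈ K) (h : MR G M k₀ t) : t ∈ K := by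
  obtain ⟨h1, h2, hchain⟩ := h
  clear h2
  induction hchain with
  | refl => exact hk
  | tail _ hstep ih => exact hcl _ ih _ hstep.1 hstep.2.2

/-- Key step for fullness of minimal separators. -/
lemma reach_step_to {S : Set V} {s x y : V} (hch : MR G (S \ {s}) x y) (hx : x ∉ S)
    (hy : y ∉ S) (hny : ¬ MR G S x y) : ∃ c, G.Adj c s ∧ MR G S x c := by
  obtain ⟨hx', hy', hchain⟩ := hch
  clear hx' hy'
  revert hx hny
  induction hchain using Relation.ReflTransGen.head_induction_on with
  | refl => exact fun hx hny => absurd (MR.refl hy) hny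
  | @head a b hstep hchain ih =>
    intro ha hny
    by_cases hbs : b = s
    · exact ⟨a, hbs ▸ hstep.1, MR.refl ha⟩
    · have hbS : b ∉ S := fun hbS => hstep.2.2 ⟨hbS, hbs⟩
      by_cases hmb : MR G S b y
      · exact absurd ((MR.of_adj hstep.1 ha hbS).trans hmb) hny
      · obtain ⟨c, hcs, hbc⟩ := ih hbS hmb
        exact ⟨c, hcs, (MR.of_adj hstep.1 ha hbS).trans hbc⟩

/-- Fullness (both sides) for a minimal `x,y`-separator. -/
lemma minSep_full {S : Set V} {x y : V} (hS : IsMinSeparator G x y S) {s : V} (hs : s ∈ S) :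
    (∃ c, G.Adj s c ∧ MR G S c x) ∧ (∃ c, G.Adj s c ∧ MR G S c y) := by
  have hsep := (isSeparator_iff.1 hS.1)
  have hT : S \ {s} ⊂ S := Set.sdiff_singleton_ssubset.2 hs
  have h2 := hS.2 _ hT
  rw [isSeparator_iff] at h2
  push_neg at h2
  have hmr : MR G (S \ {s}) x y :=
    h2 hsep.1 (fun hx => hsep.2.1 hx.1) (fun hy => hsep.2.2.1 hy.1)
  constructor
  · obtain ⟨c, hcs, hxc⟩ := reach_step_to hmr hsep.2.1 hsep.2.2.1 hsep.2.2.2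
    exact ⟨c, hcs.symm, hxc.symm⟩
  · obtain ⟨c, hcs, hyc⟩ :=
      reach_step_to hmr.symm hsep.2.2.1 hsep.2.1 (fun hc => hsep.2.2.2 hc.symm)
    exact ⟨c, hcs.symm, hyc.symm⟩

end Seps

/-! ### Full components and the saturated graph -/

section FullComp

variable {G : SimpleGraph V}

/-- `C` is a full component of `G - S`. -/
def IsFullComp (G : SimpleGraph V) (S C : Set V) : Prop :=
  (∃ c₀, c₀ ∉ S ∧ C = {v | MR G S v c₀}) ∧ ∀ s ∈ S, ∃ c ∈ C, G.Adj s c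

lemma IsFullComp.not_mem_S {S C : Set V} (hC : IsFullComp G S C) {v : V} (hv : v ∈ C) :
    v ∉ S := by
  obtain ⟨⟨c₀, hc₀, rfl⟩, -⟩ := hC
  exact hv.1

lemma IsFullComp.nonempty {S C : Set V} (hC : IsFullComp G S C) : C.Nonempty := by
  obtain ⟨⟨c₀, hc₀, rfl⟩, -⟩ := hC
  exact ⟨c₀, MR.refl hc₀⟩

lemma IsFullComp.mr_of_mem {S C : Set V} (hC : IsFullComp G S C) {c v : V} (hc : c ∈ C)
    (hv : v ∈ C) : MR G S v c := by
  obtain ⟨⟨c₀, hc₀, rfl⟩, -⟩ := hC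
  exact hv.trans hc.symm

lemma IsFullComp.mem_of_mr {S C : Set V} (hC : IsFullComp G S C) {c v : V} (hc : c ∈ C)
    (hv : MR G S v c) : v ∈ C := by
  obtain ⟨⟨c₀, hc₀, rfl⟩, -⟩ := hC
  exact hv.trans hc

lemma IsFullComp.closure {S C : Set V} (hC : IsFullComp G S C) {c v : V} (hc : c ∈ C)
    (hadj : G.Adj c v) (hv : v ∉ S) : v ∈ C :=
  hC.mem_of_mr hc (MR.of_adj hadj.symm hv (hC.not_mem_S hc))

lemma IsFullComp.adj_mem_S {S C : Set V} (hC : IsFullComp G S C) {c v : V} (hc : c ∈ C)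
    (hadj : G.Adj c v) (hv : v ∉ C) : v ∈ S := by
  by_contra hvS
  exact hv (hC.closure hc hadj hvS)

/-- The full component of `x` for a minimal `x,y`-separator. -/
lemma isFullComp_minSep {S : Set V} {x y : V} (hS : IsMinSeparator G x y S) :
    IsFullComp G S {v | MR G S v x} := by
  have hx : x ∉ S := (isSeparator_iff.1 hS.1).2.1
  exact ⟨⟨x, hx, rfl⟩, fun s hs => by
    obtain ⟨⟨c, hc, hcx⟩, -⟩ := minSep_full hS hs
    exact ⟨c, hcx, hc⟩⟩

lemma isFullComp_minSep' {S : Set V} {x y : V} (hS : IsMinSeparator G x y S) :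
    IsFullComp G S {v | MR G S v y} := isFullComp_minSep (isMinSeparator.symm hS)

/-- The saturation of `G` on `C ∪ S`: the induced graph together with all edges inside `S`. -/
def Sat (G : SimpleGraph V) (S C : Set V) : SimpleGraph V where
  Adj x y := x ≠ y ∧ ((G.Adj x y ∧ (x ∈ C ∨ y ∈ C)) ∨ (x ∈ S ∧ y ∈ S))
  symm := ⟨by
    rintro x y ⟨hne, h | h⟩
    · exact ⟨hne.symm, Or.inl ⟨h.1.symm, h.2.symm⟩⟩
    · exact ⟨hne.symm, Or.inr ⟨h.2, h.1⟩⟩⟩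
  loopless := ⟨fun x h => h.1 rfl⟩

variable {S C : Set V}

lemma sat_adj_of_left {x y : V} (hx : x ∈ C) (h : G.Adj x y) : (Sat G S C).Adj x y :=
  ⟨h.ne, Or.inl ⟨h, Or.inl hx⟩⟩

lemma sat_adj_of_right {x y : V} (hy : y ∈ C) (h : G.Adj x y) : (Sat G S C).Adj x y :=
  ⟨h.ne, Or.inl ⟨h, Or.inr hy⟩⟩

lemma sat_adj_S {x y : V} (hx : x ∈ S) (hy : y ∈ S) (hne : x ≠ y) : (Sat G S C).Adj x y :=
  ⟨hne, Or.inr ⟨hx, hy⟩⟩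

lemma sat_adj_iff (hC : IsFullComp G S C) {v x : V} (hx : x ∈ C) :
    (Sat G S C).Adj v x ↔ G.Adj v x := by
  constructor
  · rintro ⟨hne, h | h⟩
    · exact h.1
    · exact absurd h.2 (hC.not_mem_S hx)
  · exact fun h => sat_adj_of_right hx h

lemma sat_junk_isolated (hC : IsFullComp G S C) {x z : V} (hx : x ∉ C ∪ S) :
    ¬ (Sat G S C).Adj x z := by
  rintro ⟨hne, h | h⟩
  · rcases h.2 with hc | hc
    · exact hx (Or.inl hc)
    · exact hx (Or.elim (em (x ∈ S)) Or.inr (fun hxs => Or.inl (hC.closure hc h.1.symm hxs)))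
  · exact hx (Or.inr h.1)

/-- Reachability transfers from `G` to the saturation. -/
lemma mr_sat_of_mr (hC : IsFullComp G S C) {T : Set V} (hT : T ⊆ C ∪ S) {p q : V}
    (hq : q ∈ C ∪ S) (h : MR G T p q) (hp : p ∈ C ∪ S) : MR (Sat G S C) T p q := by
  obtain ⟨hpT, hqT, hchain⟩ := h
  clear hpT
  have main : ∀ a, Relation.ReflTransGen (Stp G T) a q →
      (a ∈ C ∪ S → MR (Sat G S C) T a q) ∧
      (a ∉ C ∪ S → ∃ z, z ∈ S ∧ z ∉ T ∧ MR (Sat G S C) T z q) := by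
    intro a ha
    induction ha using Relation.ReflTransGen.head_induction_on with
    | refl => exact ⟨fun _ => MR.refl hqT, fun hq' => absurd hq hq'⟩
    | @head a b hstep hchain ih =>
      constructor
      · intro haCS
        by_cases hbCS : b ∈ C ∪ S
        · refine (MR.of_adj ?_ hstep.2.1 hstep.2.2).trans (ih.1 hbCS)
          rcases haCS with hc | hs
          · exact sat_adj_of_left hc hstep.1
          · rcases hbCS with hc | hs'
            · exact sat_adj_of_right hc hstep.1
            · exact sat_adj_S hs hs' hstep.1.ne
        · -- a must be in S
          have haS : a ∈ S := by
            rcases haCS with hc | hs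
            · exact absurd (Or.elim (em (b ∈ S)) Or.inr
                (fun hbs => Or.inl (hC.closure hc hstep.1 hbs))) hbCS
            · exact hs
          obtain ⟨z, hzS, hzT, hzq⟩ := ih.2 hbCS
          by_cases haz : a = z
          · exact haz ▸ hzq
          · exact (MR.of_adj (sat_adj_S haS hzS haz) hstep.2.1 hzT).trans hzq
      · intro haCS
        by_cases hbCS : b ∈ C ∪ S
        · have hbS : b ∈ S := by
            rcases hbCS with hc | hs
            · exact absurd (Or.elim (em (a ∈ S)) Or.inr
                (fun has => Or.inl (hC.closure hc hstep.1.symm has))) haCS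
            · exact hs
          exact ⟨b, hbS, hstep.2.2, ih.1 hbCS⟩
        · exact ih.2 hbCS
  exact (main p hchain).1 hp

/-- Reachability transfers back from the saturation to `G`,
using a second full component `C'` disjoint from `C ∪ S`. -/
lemma mr_of_mr_sat (hC' : IsFullComp G S C') (hC'C : ∀ v ∈ C', v ∉ C) {T : Set V}
    (hT : T ⊆ C ∪ S) {p q : V} (h : MR (Sat G S C) T p q) : MR G T p q := by
  obtain ⟨hpT, hqT, hchain⟩ := h
  clear hpT
  have hC'T : ∀ v ∈ C', v ∉ T := by
    intro v hv hvT
    rcases hT hvT with hc | hs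
    · exact hC'C v hv hc
    · exact hC'.not_mem_S hv hs
  induction hchain using Relation.ReflTransGen.head_induction_on with
  | refl => exact MR.refl hqT
  | @head a b hstep hchain ih =>
    refine MR.trans ?_ ih
    obtain ⟨hne, hor⟩ := hstep.1
    rcases hor with hGa | ⟨haS, hbS⟩
    · exact MR.of_adj hGa.1 hstep.2.1 hstep.2.2
    · obtain ⟨da, hda, hada⟩ := hC'.2 a haS
      obtain ⟨db, hdb, hbdb⟩ := hC'.2 b hbS
      have hdd : MR G S da db := hC'.mr_of_mem hdb hda
      have hddT : MR G T da db :=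
        hdd.transfer (fun v hv => hC'T v (hC'.mem_of_mr hdb hv))
      exact ((MR.of_adj hada hstep.2.1 (hC'T da hda)).trans hddT).trans
        (MR.of_adj hbdb.symm (hC'T db hdb) hstep.2.2)

end FullComp

/-! ### Transfer of moplexes from the saturation -/

section Transfer

variable {G : SimpleGraph V} {S C C' : Set V}

lemma sat_junk_eq {T : Set V} (hC : IsFullComp G S C) {u v : V} (hu : u ∉ C ∪ S)
    (h : MR (Sat G S C) T u v) : u = v := by
  rcases h.2.2.cases_head with h' | ⟨c, hstep, -⟩
  · exact h'
  · exact absurd hstep.1 (sat_junk_isolated hC hu)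

lemma moplex_transfer [Fintype V] (hmin : IsMinimalSeparator G S) (hC : IsFullComp G S C)
    (hC' : IsFullComp G S C') (hC'C : ∀ v ∈ C', v ∉ C)
    {X : Set V} (hX : X ⊆ C) (hmop : IsMoplex (Sat G S C) X) : IsMoplex G X := by
  obtain ⟨hne, ⟨hclq, hmod⟩, hmax, hsepx⟩ := hmop
  have hiff : ∀ v x, x ∈ C → ((Sat G S C).Adj v x ↔ G.Adj v x) := fun v x hx =>
    sat_adj_iff hC hx
  obtain ⟨x₀, hx₀⟩ := hne
  have hGclq : G.IsClique X := by
    intro x hx y hy hne'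
    exact (hiff x y (hX hy)).1 (hclq hx hy hne')
  have hGmod : IsModule G X := by
    intro v hv
    rcases hmod v hv with h | h
    · exact Or.inl (fun x hx => (hiff v x (hX hx)).1 (h x hx))
    · exact Or.inr (fun x hx hGa => h x hx ((hiff v x (hX hx)).2 hGa))
  have hGmax : ∀ Y, X ⊆ Y → IsCliqueModule G Y → Y = X := by
    intro Y hXY ⟨hYclq, hYmod⟩
    have hYCS : Y ⊆ C ∪ S := by
      intro y hy
      by_contra hyCS
      have hyx : y ≠ x₀ := fun h => hyCS (h ▸ Or.inl (hX hx₀))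
      have : G.Adj y x₀ := hYclq hy (hXY hx₀) hyx
      exact hyCS (Or.elim (em (y ∈ S)) Or.inr
        (fun hyS => Or.inl (hC.closure (hX hx₀) this.symm hyS)))
    have hYC : Y ⊆ C := by
      intro y hy
      rcases hYCS hy with hc | hs
      · exact hc
      · exfalso
        obtain ⟨d, hd, hdy⟩ := hC'.2 y hs
        have hdY : d ∉ Y := by
          intro hdY
          rcases hYCS hdY with hc | hs'
          · exact hC'C d hd hc
          · exact hC'.not_mem_S hd hs'
        rcases hYmod d hdY with h | h
        · have hdC : d ∉ C := hC'C d hd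
          exact hC'.not_mem_S hd (hC.adj_mem_S (hX hx₀) (h x₀ (hXY hx₀)).symm hdC)
        · exact h y hy hdy.symm
    refine hmax Y hXY ⟨?_, ?_⟩
    · intro x hx y hy hne'
      exact sat_adj_of_right (hYC hy) (hYclq hx hy hne')
    · intro v hv
      rcases hYmod v hv with h | h
      · exact Or.inl (fun x hx => (hiff v x (hYC hx)).2 (h x hx))
      · exact Or.inr (fun x hx hGa => h x hx ((hiff v x (hYC hx)).1 hGa))
  have hnbhd : setNbhd G X = setNbhd (Sat G S C) X := by
    ext v
    constructor
    · rintro ⟨hv, x, hx, hadj⟩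
      exact ⟨hv, x, hx, (hiff v x (hX hx)).2 hadj⟩
    · rintro ⟨hv, x, hx, hadj⟩
      exact ⟨hv, x, hx, (hiff v x (hX hx)).1 hadj⟩
  refine ⟨⟨x₀, hx₀⟩, ⟨hGclq, hGmod⟩, hGmax, ?_⟩
  rcases hsepx with hempty | hminsep
  · exact Or.inl (hnbhd ▸ hempty)
  · by_cases hTe : setNbhd (Sat G S C) X = ∅
    · exact Or.inl (hnbhd ▸ hTe)
    · right
      rw [hnbhd]
      set T' := setNbhd (Sat G S C) X with hT'
      obtain ⟨u, v, huv, hpair⟩ := hminsep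
      have hsep := isSeparator_iff.1 hpair.1
      have hT'CS : T' ⊆ C ∪ S := by
        rintro z ⟨hz, x, hx, hadj⟩
        rcases hadj.2 with h | h
        · exact Or.elim (em (z ∈ C)) Or.inl
            (fun hzC => Or.inr (hC.adj_mem_S (hX hx) h.1.symm hzC))
        · exact Or.inr h.1
      have hjunk : ∀ w : V, w ∉ C ∪ S → w = u ∨ w = v → False := by
        intro w hw hwuv
        have hsepe : IsSeparator (Sat G S C) u v ∅ := by
          rw [isSeparator_iff]
          refine ⟨hsep.1, by simp, by simp, ?_⟩
          intro hmr
          rcases hwuv with rfl | rfl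
          · exact huv (sat_junk_eq hC hw hmr)
          · exact huv ((sat_junk_eq hC hw hmr.symm).symm)
        exact hpair.2 ∅ (Set.empty_ssubset.2 (Set.nonempty_iff_ne_empty.2 hTe)) hsepe
      have huCS : u ∈ C ∪ S := by_contra fun h => hjunk u h (Or.inl rfl)
      have hvCS : v ∈ C ∪ S := by_contra fun h => hjunk v h (Or.inr rfl)
      have hnotSS : ¬ (u ∈ S ∧ v ∈ S) := fun ⟨h1, h2⟩ => hsep.1 (sat_adj_S h1 h2 huv)
      refine ⟨u, v, huv, ?_, ?_⟩
      · rw [isSeparator_iff]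
        refine ⟨?_, hsep.2.1, hsep.2.2.1, ?_⟩
        · intro hGadj
          rcases huCS with hc | hs
          · exact hsep.1 (sat_adj_of_left hc hGadj)
          · rcases hvCS with hc | hs'
            · exact hsep.1 (sat_adj_of_right hc hGadj)
            · exact hnotSS ⟨hs, hs'⟩
        · intro hmr
          exact hsep.2.2.2 (mr_sat_of_mr hC hT'CS hvCS hmr huCS)
      · intro T hT hTsep
        rw [isSeparator_iff] at hTsep
        have : ¬ IsSeparator (Sat G S C) u v T := hpair.2 T hT
        rw [isSeparator_iff] at this
        push_neg at this
        have hmr := this hsep.1 hTsep.2.1 hTsep.2.2.1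
        exact hTsep.2.2.2 (mr_of_mr_sat hC' hC'C (hT.subset.trans hT'CS) hmr)

end Transfer

/-! ### Berry–Bordat: every full component of a minimal separator contains a moplex -/

section BBAux

variable {G : SimpleGraph V} {S C : Set V}

lemma mr_sat_inC (hC : IsFullComp G S C) {T : Set V} (hTS : T ⊆ S) {a b : V}
    (ha : a ∈ C) (hb : b ∈ C) : MR (Sat G S C) T a b := by
  have hnot : ∀ v ∈ C, v ∉ T := fun v hv hvT => hC.not_mem_S hv (hTS hvT)
  obtain ⟨h1, h2, hchain⟩ := hC.mr_of_mem hb ha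
  clear h1 h2
  refine ⟨hnot a ha, hnot b hb, ?_⟩
  revert ha
  induction hchain using Relation.ReflTransGen.head_induction_on with
  | refl => exact fun _ => Relation.ReflTransGen.refl
  | @head x c hstep hchain ih =>
    intro hx
    have hc : c ∈ C := hC.closure hx hstep.1 hstep.2.2
    exact Relation.ReflTransGen.head ⟨sat_adj_of_left hx hstep.1, hnot x hx, hnot c hc⟩ (ih hc)

lemma mr_extend_isolated {H : SimpleGraph V} {T : Set V} {t x y : V}
    (hiso : ∀ z, ¬ H.Adj t z) (hx : x ≠ t) (h : MR H (T \ {t}) x y) : MR H T x y := by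
  obtain ⟨hx', hy', hchain⟩ := h
  have hy : y ≠ t := by
    rcases hchain.cases_tail with h | ⟨c, _, hstep⟩
    · exact h ▸ hx
    · rintro rfl
      exact hiso c hstep.1.symm
  refine ⟨fun hxt => hx' ⟨hxt, hx⟩, fun hyt => hy' ⟨hyt, hy⟩, ?_⟩
  clear hx' hy'
  revert hx
  induction hchain using Relation.ReflTransGen.head_induction_on with
  | refl => exact fun _ => Relation.ReflTransGen.refl
  | @head a c hstep hchain ih =>
    intro ha
    have hc : c ≠ t := by
      rintro rfl
      exact hiso a hstep.1.symm
    exact Relation.ReflTransGen.head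
      ⟨hstep.1, fun h' => hstep.2.1 ⟨h', ha⟩, fun h' => hstep.2.2 ⟨h', hc⟩⟩ (ih hc)

end BBAux

section BB

variable [Fintype V]

theorem bb_aux (n : ℕ) : ∀ (G : SimpleGraph V) (S C : Set V),
    IsMinimalSeparator G S → IsFullComp G S C → C.ncard = n →
    ∃ X, X ⊆ C ∧ IsMoplex G X := by
  induction n using Nat.strong_induction_on with
  | _ n ih =>
  intro G S C hmin hC hcard
  classical
  obtain ⟨a₀, b₀, hab₀, hpair₀⟩ := hmin
  have hsep₀ := isSeparator_iff.1 hpair₀.1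
  have hCa : IsFullComp G S {v | MR G S v a₀} := isFullComp_minSep hpair₀
  have hCb : IsFullComp G S {v | MR G S v b₀} := isFullComp_minSep' hpair₀
  -- a second full component disjoint from C
  obtain ⟨C', hC', hdisj⟩ : ∃ C', IsFullComp G S C' ∧ ∀ v ∈ C', v ∉ C := by
    by_cases ha₀ : a₀ ∈ C
    · refine ⟨{v | MR G S v b₀}, hCb, fun v hv hvC => ?_⟩
      exact hsep₀.2.2.2 ((hC.mr_of_mem hvC ha₀).trans hv)
    · refine ⟨{v | MR G S v a₀}, hCa, fun v hv hvC => ?_⟩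
      exact ha₀ (hC.mem_of_mr hvC hv.symm)
  by_cases hclq : ∀ x ∈ C ∪ S, ∀ y ∈ C ∪ S, x ≠ y → (Sat G S C).Adj x y
  · -- Case 1: C itself is a moplex of G
    refine ⟨C, subset_rfl, hC.nonempty, ⟨?_, ?_⟩, ?_, ?_⟩
    · intro x hx y hy hne
      exact (sat_adj_iff hC hy).1 (hclq x (Or.inl hx) y (Or.inl hy) hne)
    · intro v hv
      by_cases hvS : v ∈ S
      · refine Or.inl (fun x hx => ?_)
        have hne : v ≠ x := fun h => hC.not_mem_S hx (h ▸ hvS)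
        exact (sat_adj_iff hC hx).1 (hclq v (Or.inr hvS) x (Or.inl hx) hne)
      · refine Or.inr (fun x hx hadj => ?_)
        exact hvS (hC.adj_mem_S hx hadj.symm hv)
    · intro Y hCY ⟨hYclq, hYmod⟩
      obtain ⟨x₀, hx₀⟩ := hC.nonempty
      have hYS : ∀ y ∈ Y, y ∉ C → y ∈ S := by
        intro y hy hyC
        have hne : y ≠ x₀ := fun h => hyC (h ▸ hx₀)
        exact hC.adj_mem_S hx₀ (hYclq hy (hCY hx₀) hne).symm hyC
      have : ∀ y ∈ Y, y ∈ C := by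
        intro y hy
        by_contra hyC
        have hyS := hYS y hy hyC
        obtain ⟨d, hd, hdy⟩ := hC'.2 y hyS
        have hdY : d ∉ Y := by
          intro hdY
          by_cases hdC : d ∈ C
          · exact hdisj d hd hdC
          · exact hC'.not_mem_S hd (hYS d hdY hdC)
        rcases hYmod d hdY with h | h
        · exact hC'.not_mem_S hd (hC.adj_mem_S hx₀ (h x₀ (hCY hx₀)).symm (hdisj d hd))
        · exact h y hy hdy.symm
      exact Set.Subset.antisymm this hCY
    · have hnb : setNbhd G C = S := by
        ext v
        constructor
        · rintro ⟨hv, x, hx, hadj⟩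
          exact hC.adj_mem_S hx hadj.symm hv
        · intro hv
          obtain ⟨c, hc, hadj⟩ := hC.2 v hv
          exact ⟨fun hvC => hC.not_mem_S hvC hv, c, hc, hadj⟩
      exact Or.inr (hnb ▸ ⟨a₀, b₀, hab₀, hpair₀⟩)
  · -- Case 2: recurse in the saturated graph
    push_neg at hclq
    obtain ⟨a', ha', b', hb', hab', hnadj'⟩ := hclq
    -- arrange a ∈ C
    obtain ⟨a, b, haC, hbCS, hab, hnadj⟩ :
        ∃ a b, a ∈ C ∧ b ∈ C ∪ S ∧ a ≠ b ∧ ¬ (Sat G S C).Adj a b := by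
      rcases ha' with hc | hs
      · exact ⟨a', b', hc, hb', hab', hnadj'⟩
      · rcases hb' with hc | hs'
        · exact ⟨b', a', hc, Or.inr hs, hab'.symm, fun h => hnadj' h.symm⟩
        · exact absurd (sat_adj_S hs hs' hab') hnadj'
    obtain ⟨T, hT⟩ := exists_minSep_pair (G := Sat G S C) hab hnadj
    have hTsep := isSeparator_iff.1 hT.1
    have hTmin : IsMinimalSeparator (Sat G S C) T := ⟨a, b, hab, hT⟩
    have hTCS : T ⊆ C ∪ S := by
      intro t ht
      by_contra htCS
      have hiso : ∀ z, ¬ (Sat G S C).Adj t z := fun z => sat_junk_isolated hC htCS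
      have h2 := hT.2 (T \ {t}) (Set.sdiff_singleton_ssubset.2 ht)
      rw [isSeparator_iff] at h2
      push_neg at h2
      have hmr := h2 hTsep.1 (fun h => hTsep.2.1 h.1) (fun h => hTsep.2.2.1 h.1)
      have hat : a ≠ t := fun h => htCS (h ▸ Or.inl haC)
      exact hTsep.2.2.2 (mr_extend_isolated hiso hat hmr)
    have hTC : ∃ t, t ∈ T ∧ t ∈ C := by
      by_contra htC
      push_neg at htC
      have hTS : T ⊆ S := by
        intro t ht
        rcases hTCS ht with hc | hs
        · exact absurd hc (htC t ht)
        · exact hs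
      rcases hbCS with hbC | hbS
      · exact hTsep.2.2.2 (mr_sat_inC hC hTS haC hbC)
      · obtain ⟨cb, hcb, hbcb⟩ := hC.2 b hbS
        have h1 : MR (Sat G S C) T a cb := mr_sat_inC hC hTS haC hcb
        have h2 : MR (Sat G S C) T cb b := by
          refine MR.of_adj (sat_adj_of_left hcb hbcb.symm) ?_ hTsep.2.2.1
          exact fun h => hC.not_mem_S hcb (hTS h)
        exact hTsep.2.2.2 (h1.trans h2)
    obtain ⟨t₀, ht₀T, ht₀C⟩ := hTC
    have hCaH : IsFullComp (Sat G S C) T {v | MR (Sat G S C) T v a} := isFullComp_minSep hT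
    have hCbH : IsFullComp (Sat G S C) T {v | MR (Sat G S C) T v b} := isFullComp_minSep' hT
    have hABdisj : ∀ v, MR (Sat G S C) T v a → MR (Sat G S C) T v b → False := by
      intro v h1 h2
      exact hTsep.2.2.2 (h1.symm.trans h2)
    -- pick the side avoiding S
    obtain ⟨C₂, hC₂, hC₂S, hrep⟩ :
        ∃ C₂, IsFullComp (Sat G S C) T C₂ ∧ (∀ v ∈ C₂, v ∉ S) ∧
          (∃ r ∈ C ∪ S, ∀ v ∈ C₂, MR (Sat G S C) T v r) := by
      by_cases hSa : ∀ s ∈ S, ¬ MR (Sat G S C) T s a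
      · exact ⟨_, hCaH, fun v hv hvS => hSa v hvS hv, ⟨a, Or.inl haC, fun v hv => hv⟩⟩
      · push_neg at hSa
        obtain ⟨s, hsS, hsa⟩ := hSa
        refine ⟨_, hCbH, fun v hv hvS => ?_, ⟨b, hbCS, fun v hv => hv⟩⟩
        by_cases hsv : s = v
        · exact hABdisj v (hsv ▸ hsa) hv
        · have hadj : (Sat G S C).Adj s v := sat_adj_S hsS hvS hsv
          exact hABdisj v (((MR.of_adj hadj hsa.1 hv.1).symm).trans hsa) hv
    have hC₂C : C₂ ⊆ C := by
      intro v hv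
      obtain ⟨r, hrCS, hr⟩ := hrep
      have hvCS : v ∈ C ∪ S := by
        by_contra hjunk
        exact hjunk ((sat_junk_eq hC hjunk (hr v hv)) ▸ hrCS)
      rcases hvCS with hc | hs
      · exact hc
      · exact absurd hs (hC₂S v hv)
    have hss : C₂ ⊂ C := by
      refine ⟨hC₂C, fun hCC₂ => ?_⟩
      exact hC₂.not_mem_S (hCC₂ ht₀C) ht₀T
    have hlt : C₂.ncard < n := hcard ▸ Set.ncard_lt_ncard hss (Set.toFinite C)
    obtain ⟨X, hXC₂, hXmop⟩ := ih C₂.ncard hlt (Sat G S C) T C₂ hTmin hC₂ rfl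
    exact ⟨X, hXC₂.trans hC₂C,
      moplex_transfer ⟨a₀, b₀, hab₀, hpair₀⟩ hC hC' hdisj (hXC₂.trans hC₂C) hXmop⟩

/-- Berry–Bordat: every full component of a minimal separator contains a moplex. -/
theorem bb {G : SimpleGraph V} {S C : Set V} (hmin : IsMinimalSeparator G S)
    (hC : IsFullComp G S C) : ∃ X, X ⊆ C ∧ IsMoplex G X :=
  bb_aux C.ncard G S C hmin hC rfl

end BB

/-! ### Structure of minimal separators in a graph with exactly two moplexes -/

section TwoMoplex

variable [Fintype V] {G : SimpleGraph V} {U W : Set V} {u₀ w₀ : V}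

lemma sep_struct (honly : ∀ X, IsMoplex G X → X = U ∨ X = W) (hUW : U ≠ W)
    (hu₀ : u₀ ∈ U) (hw₀ : w₀ ∈ W) {P : Set V} (hP : IsMinimalSeparator G P) :
    (u₀ ∉ P ∧ w₀ ∉ P) ∧ ¬ MR G P u₀ w₀ ∧
    (∀ z, z ∉ P → MR G P z u₀ ∨ MR G P z w₀) ∧
    (∀ p ∈ P, (∃ c, G.Adj p c ∧ MR G P c u₀) ∧ (∃ c, G.Adj p c ∧ MR G P c w₀)) := by
  classical
  have main : ∀ x y : V, x ≠ y → IsMinSeparator G x y P →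
      MR G P u₀ x → MR G P w₀ y →
      (u₀ ∉ P ∧ w₀ ∉ P) ∧ ¬ MR G P u₀ w₀ ∧
      (∀ z, z ∉ P → MR G P z u₀ ∨ MR G P z w₀) ∧
      (∀ p ∈ P, (∃ c, G.Adj p c ∧ MR G P c u₀) ∧ (∃ c, G.Adj p c ∧ MR G P c w₀)) := by
    intro x y hxy hpair hux hwy
    have hsep := isSeparator_iff.1 hpair.1
    have hf1 : u₀ ∉ P ∧ w₀ ∉ P := ⟨hux.1, hwy.1⟩
    have hf2 : ¬ MR G P u₀ w₀ := fun h =>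
      hsep.2.2.2 (hux.symm.trans (h.trans hwy)).symm.symm
    have hf4 : ∀ p ∈ P, (∃ c, G.Adj p c ∧ MR G P c u₀) ∧
        (∃ c, G.Adj p c ∧ MR G P c w₀) := by
      intro p hp
      obtain ⟨⟨cx, hadjx, hcx⟩, ⟨cy, hadjy, hcy⟩⟩ := minSep_full hpair hp
      exact ⟨⟨cx, hadjx, hcx.trans hux.symm⟩, ⟨cy, hadjy, hcy.trans hwy.symm⟩⟩
    refine ⟨hf1, hf2, ?_, hf4⟩
    intro z hz
    by_contra hcon
    push_neg at hcon
    obtain ⟨hzu, hzw⟩ := hcon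
    set D : Set V := {v | MR G P v z} with hD
    have hzD : z ∈ D := MR.refl hz
    set ND : Set V := setNbhd G D with hND
    have hNDP : ND ⊆ P := by
      rintro p ⟨hpD, d, hd, hadj⟩
      by_contra hpP
      exact hpD ((MR.of_adj hadj hpP hd.1).trans hd)
    have hDstay : ∀ k ∈ D, ∀ v, G.Adj k v → v ∉ ND → v ∈ D := by
      intro k hk v hadj hvND
      by_contra hvD
      exact hvND ⟨hvD, k, hk, hadj.symm⟩
    have hu₀D : u₀ ∉ D := fun h => hzu (h.symm)
    have hw₀D : w₀ ∉ D := fun h => hzw (h.symm)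
    have hsepND : IsSeparator G z u₀ ND := by
      rw [isSeparator_iff]
      refine ⟨?_, fun h => h.1 hzD, fun h => hf1.1 (hNDP h), ?_⟩
      · intro hadj
        exact hu₀D (hDstay z hzD u₀ hadj (fun h => hf1.1 (hNDP h)))
      · intro hmr
        exact hu₀D (mr_stay hzD hDstay hmr)
    have hzu₀ : z ≠ u₀ := fun h => hzu (h ▸ MR.refl hz)
    have hminND : IsMinSeparator G z u₀ ND := by
      refine ⟨hsepND, ?_⟩
      intro T hT hTsep
      obtain ⟨p, hpND, hpT⟩ := Set.exists_of_ssubset hT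
      have hTP : T ⊆ P := hT.subset.trans hNDP
      obtain ⟨⟨c, hadjc, hcu⟩, -⟩ := hf4 p (hNDP hpND)
      obtain ⟨hpD, d, hd, hadjd⟩ := hpND
      have h1 : MR G T z d := (hd.mono hTP).symm
      have h2 : MR G T d p := MR.of_adj hadjd.symm (fun h => hd.1 (hTP h)) hpT
      have h3 : MR G T p c := MR.of_adj hadjc hpT (fun h => hcu.1 (hTP h))
      have h4 : MR G T c u₀ := hcu.mono hTP
      exact (isSeparator_iff.1 hTsep).2.2.2 (((h1.trans h2).trans h3).trans h4)
    have hfullD : IsFullComp G ND D := by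
      constructor
      · refine ⟨z, fun h => hz (hNDP h), ?_⟩
        ext v
        constructor
        · intro hv
          exact hv.mono hNDP
        · intro hv
          exact mr_stay hzD hDstay hv.symm
      · rintro p ⟨hpD, d, hd, hadj⟩
        exact ⟨d, hd, hadj⟩
    obtain ⟨X, hXD, hXmop⟩ := bb ⟨z, u₀, hzu₀, hminND⟩ hfullD
    rcases honly X hXmop with rfl | rfl
    · exact hu₀D (hXD hu₀)
    · exact hw₀D (hXD hw₀)
  -- set up: locate u₀ and w₀ in the two full components
  obtain ⟨x, y, hxy, hpair⟩ := hP
  have hsep := isSeparator_iff.1 hpair.1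
  obtain ⟨Xx, hXxsub, hXxmop⟩ := bb ⟨x, y, hxy, hpair⟩ (isFullComp_minSep hpair)
  obtain ⟨Xy, hXysub, hXymop⟩ := bb ⟨x, y, hxy, hpair⟩ (isFullComp_minSep' hpair)
  have hXne : Xx ≠ Xy := by
    intro h
    obtain ⟨v, hv⟩ := hXxmop.1
    have h1 : MR G P v x := hXxsub hv
    have h2 : MR G P v y := hXysub (h ▸ hv)
    exact hsep.2.2.2 (h1.symm.trans h2)
  rcases honly Xx hXxmop with h1 | h1 <;> rcases honly Xy hXymop with h2 | h2
  · exact absurd (h1.trans h2.symm) hXne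
  · exact main x y hxy hpair (hXxsub (h1 ▸ hu₀)) (hXysub (h2 ▸ hw₀))
  · exact main y x hxy.symm (isMinSeparator.symm hpair)
      (hXysub (h2 ▸ hu₀)) (hXxsub (h1 ▸ hw₀))
  · exact absurd (h1.trans h2.symm) hXne

end TwoMoplex

/-! ### Consistency and transitivity of the orientation -/

section Orient

variable [Fintype V] {G : SimpleGraph V} {U W : Set V} {u₀ w₀ : V}

/-- Two minimal separators cannot disagree about a nonadjacent pair. -/
lemma no_conflict (honly : ∀ X, IsMoplex G X → X = U ∨ X = W) (hUW : U ≠ W)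
    (hu₀ : u₀ ∈ U) (hw₀ : w₀ ∈ W) {x y : V} {P1 P2 : Set V}
    (hP1 : IsMinimalSeparator G P1) (hP2 : IsMinimalSeparator G P2)
    (hx1 : MR G P1 x u₀) (hy1 : MR G P1 y w₀)
    (hy2 : MR G P2 y u₀) (hx2 : MR G P2 x w₀) : False := by
  classical
  obtain ⟨hf11, hf21, hf31, hf41⟩ := sep_struct honly hUW hu₀ hw₀ hP1
  obtain ⟨hf12, hf22, hf32, hf42⟩ := sep_struct honly hUW hu₀ hw₀ hP2
  set K : Set V := {v | MR G (P1 ∪ P2) v y} with hK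
  have hyK : y ∈ K := MR.refl (fun h => h.elim (fun h1 => hy1.1 h1) (fun h2 => hy2.1 h2))
  have hKB1 : ∀ k ∈ K, MR G P1 k w₀ := fun k hk =>
    (hk.mono Set.subset_union_left).trans hy1
  have hKA2 : ∀ k ∈ K, MR G P2 k u₀ := fun k hk =>
    (hk.mono Set.subset_union_right).trans hy2
  set M : Set V := setNbhd G K with hM
  have hMP : M ⊆ P1 ∪ P2 := by
    rintro p ⟨hpK, k, hk, hadj⟩
    by_contra hpP
    exact hpK ((MR.of_adj hadj hpP hk.1).trans hk)
  have hMA1 : ∀ p ∈ M, ¬ MR G P1 p u₀ := by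
    intro p hp hpu
    by_cases hpP1 : p ∈ P1
    · exact hpu.1 hpP1
    · obtain ⟨hpK, k, hk, hadj⟩ := hp
      have : MR G P1 p w₀ := (MR.of_adj hadj hpP1 (hKB1 k hk).1).trans (hKB1 k hk)
      exact hf21 (hpu.symm.trans this)
  have hMB2 : ∀ p ∈ M, ¬ MR G P2 p w₀ := by
    intro p hp hpw
    by_cases hpP2 : p ∈ P2
    · exact hpw.1 hpP2
    · obtain ⟨hpK, k, hk, hadj⟩ := hp
      have : MR G P2 p u₀ := (MR.of_adj hadj hpP2 (hKA2 k hk).1).trans (hKA2 k hk)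
      exact hf22 (this.symm.trans hpw)
  have hKstay : ∀ k ∈ K, ∀ v, G.Adj k v → v ∉ M → v ∈ K := by
    intro k hk v hadj hvM
    by_contra hvK
    exact hvM ⟨hvK, k, hk, hadj.symm⟩
  have hu₀M : u₀ ∉ M := fun h => hMA1 u₀ h (MR.refl hf11.1)
  have hw₀M : w₀ ∉ M := fun h => hMB2 w₀ h (MR.refl hf12.2)
  have hu₀K : u₀ ∉ K := fun h => hf21 ((hKB1 u₀ h))
  have hw₀K : w₀ ∉ K := fun h => hf22 ((hKA2 w₀ h).symm)
  -- M separates y from u₀ and from w₀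
  have hsepU : IsSeparator G y u₀ M := by
    rw [isSeparator_iff]
    refine ⟨?_, fun h => h.1 hyK, hu₀M, fun h => hu₀K (mr_stay hyK hKstay h)⟩
    intro hadj
    exact hf21 ((MR.of_adj hadj hy1.1 hf11.1).symm.trans hy1)
  have hsepW : IsSeparator G y w₀ M := by
    rw [isSeparator_iff]
    refine ⟨?_, fun h => h.1 hyK, hw₀M, fun h => hw₀K (mr_stay hyK hKstay h)⟩
    intro hadj
    exact hf22 (hy2.symm.trans (MR.of_adj hadj hy2.1 hf12.2))
  have hyu₀ : y ≠ u₀ := fun h => hf21 (h ▸ hy1)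
  have hyw₀ : y ≠ w₀ := fun h => hf22 (h ▸ hy2).symm
  obtain ⟨Q', hQ'M, hQ'⟩ := exists_minSeparator_subset hsepU
  obtain ⟨Q'', hQ''M, hQ''⟩ := exists_minSeparator_subset hsepW
  have hQ'min : IsMinimalSeparator G Q' := ⟨y, u₀, hyu₀, hQ'⟩
  have hQ''min : IsMinimalSeparator G Q'' := ⟨y, w₀, hyw₀, hQ''⟩
  obtain ⟨hg1', hg2', hg3', hg4'⟩ := sep_struct honly hUW hu₀ hw₀ hQ'min
  obtain ⟨hg1'', hg2'', hg3'', hg4''⟩ := sep_struct honly hUW hu₀ hw₀ hQ''min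
  have hQ'sep := isSeparator_iff.1 hQ'.1
  have hQ''sep := isSeparator_iff.1 hQ''.1
  -- every vertex of M outside Q' is reachable from y avoiding Q'
  have hMQ' : ∀ q ∈ M, q ∉ Q' → MR G Q' y q := by
    rintro q ⟨hqK, k, hk, hadj⟩ hqQ'
    have hkQ' : MR G Q' k y := hk.mono (hQ'M.trans hMP)
    exact hkQ'.symm.trans (MR.of_adj hadj.symm hkQ'.1 hqQ')
  have key1 : ∀ v, MR G Q' v u₀ → v ∉ Q'' := by
    intro v hv hvQ''
    by_cases hvQ' : v ∈ Q'
    · exact hv.1 hvQ'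
    · exact hQ'sep.2.2.2 ((hMQ' v (hQ''M hvQ'') hvQ').trans hv)
  have hxQ'u : MR G Q' x u₀ :=
    hx1.transfer (fun v hv hvQ' => hMA1 v (hQ'M hvQ') hv)
  have hxQ''u : MR G Q'' x u₀ := hxQ'u.transfer (fun v hv => key1 v hv)
  have hxQ''w : MR G Q'' x w₀ :=
    hx2.transfer (fun v hv hvQ'' => hMB2 v (hQ''M hvQ'') hv)
  exact hg2'' (hxQ''u.symm.trans hxQ''w)

/-- Transitivity step: preferences compose. -/
lemma trans_step (honly : ∀ X, IsMoplex G X → X = U ∨ X = W) (hUW : U ≠ W)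
    (hu₀ : u₀ ∈ U) (hw₀ : w₀ ∈ W) {x y z : V} {P P' : Set V}
    (hP : IsMinimalSeparator G P) (hP' : IsMinimalSeparator G P')
    (hx : MR G P x u₀) (hy1 : MR G P y w₀)
    (hy2 : MR G P' y u₀) (hz : MR G P' z w₀) :
    ∃ Q, IsMinimalSeparator G Q ∧ MR G Q x u₀ ∧ MR G Q z w₀ := by
  classical
  obtain ⟨hf11, hf21, hf31, hf41⟩ := sep_struct honly hUW hu₀ hw₀ hP
  obtain ⟨hf12, hf22, hf32, hf42⟩ := sep_struct honly hUW hu₀ hw₀ hP'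
  set K : Set V := {v | MR G (P ∪ P') v y} with hK
  have hyK : y ∈ K := MR.refl (fun h => h.elim (fun h1 => hy1.1 h1) (fun h2 => hy2.1 h2))
  have hKB1 : ∀ k ∈ K, MR G P k w₀ := fun k hk =>
    (hk.mono Set.subset_union_left).trans hy1
  have hKA2 : ∀ k ∈ K, MR G P' k u₀ := fun k hk =>
    (hk.mono Set.subset_union_right).trans hy2
  set M : Set V := setNbhd G K with hM
  have hMP : M ⊆ P ∪ P' := by
    rintro p ⟨hpK, k, hk, hadj⟩
    by_contra hpP
    exact hpK ((MR.of_adj hadj hpP hk.1).trans hk)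
  have hMA1 : ∀ p ∈ M, ¬ MR G P p u₀ := by
    intro p hp hpu
    by_cases hpP1 : p ∈ P
    · exact hpu.1 hpP1
    · obtain ⟨hpK, k, hk, hadj⟩ := hp
      have : MR G P p w₀ := (MR.of_adj hadj hpP1 (hKB1 k hk).1).trans (hKB1 k hk)
      exact hf21 (hpu.symm.trans this)
  have hMB2 : ∀ p ∈ M, ¬ MR G P' p w₀ := by
    intro p hp hpw
    by_cases hpP2 : p ∈ P'
    · exact hpw.1 hpP2
    · obtain ⟨hpK, k, hk, hadj⟩ := hp
      have : MR G P' p u₀ := (MR.of_adj hadj hpP2 (hKA2 k hk).1).trans (hKA2 k hk)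
      exact hf22 (this.symm.trans hpw)
  have hKstay : ∀ k ∈ K, ∀ v, G.Adj k v → v ∉ M → v ∈ K := by
    intro k hk v hadj hvM
    by_contra hvK
    exact hvM ⟨hvK, k, hk, hadj.symm⟩
  have hw₀M : w₀ ∉ M := fun h => hMB2 w₀ h (MR.refl hf12.2)
  have hw₀K : w₀ ∉ K := fun h => hf22 ((hKA2 w₀ h).symm)
  have hsepW : IsSeparator G y w₀ M := by
    rw [isSeparator_iff]
    refine ⟨?_, fun h => h.1 hyK, hw₀M, fun h => hw₀K (mr_stay hyK hKstay h)⟩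
    intro hadj
    exact hf22 (hy2.symm.trans (MR.of_adj hadj hy2.1 hf12.2))
  have hyw₀ : y ≠ w₀ := fun h => hf22 (h ▸ hy2).symm
  obtain ⟨Q'', hQ''M, hQ''⟩ := exists_minSeparator_subset hsepW
  have hQ''min : IsMinimalSeparator G Q'' := ⟨y, w₀, hyw₀, hQ''⟩
  have hxQ''u : MR G Q'' x u₀ :=
    hx.transfer (fun v hv hvQ'' => hMA1 v (hQ''M hvQ'') hv)
  have hzQ''w : MR G Q'' z w₀ :=
    hz.transfer (fun v hv hvQ'' => hMB2 v (hQ''M hvQ'') hv)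
  exact ⟨Q'', hQ''min, hxQ''u, hzQ''w⟩

end Orient

/-- Every graph with at most two moplexes is a cocomparability graph. -/
theorem twoMoplex_cocomparability {V : Type*} [Fintype V] (G : SimpleGraph V)
    (h : {X : Set V | IsMoplex G X}.ncard ≤ 2) :
    HasTransitiveComplementOrientation G := by
  classical
  by_cases hcomp : ∀ x y : V, x ≠ y → G.Adj x y
  · refine ⟨fun _ _ => False, fun a b c hab _ => hab.elim, fun x y hf => hf.elim, ?_⟩
    intro x y hxy hnadj
    exact absurd (hcomp x y hxy) hnadj
  · push_neg at hcomp
    obtain ⟨x₀, y₀, hne₀, hnadj₀⟩ := hcomp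
    obtain ⟨S₀, hS₀⟩ := exists_minSep_pair hne₀ hnadj₀
    have hS₀min : IsMinimalSeparator G S₀ := ⟨x₀, y₀, hne₀, hS₀⟩
    have hsep₀ := isSeparator_iff.1 hS₀.1
    obtain ⟨U, hUsub, hUmop⟩ := bb hS₀min (isFullComp_minSep hS₀)
    obtain ⟨W, hWsub, hWmop⟩ := bb hS₀min (isFullComp_minSep' hS₀)
    have hUW : U ≠ W := by
      intro hEq
      obtain ⟨v, hv⟩ := hUmop.1
      exact hsep₀.2.2.2 ((hUsub hv).symm.trans (hWsub (hEq ▸ hv)))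
    have honly : ∀ X, IsMoplex G X → X = U ∨ X = W := by
      intro Y hY
      by_contra hcon
      push_neg at hcon
      have hsub : ({U, W, Y} : Set (Set V)) ⊆ {X : Set V | IsMoplex G X} := by
        intro Z hZ
        simp only [Set.mem_insert_iff, Set.mem_singleton_iff] at hZ
        rcases hZ with rfl | rfl | rfl
        exacts [hUmop, hWmop, hY]
      have h3 : ({U, W, Y} : Set (Set V)).ncard = 3 := by
        rw [Set.ncard_insert_of_notMem, Set.ncard_insert_of_notMem,
          Set.ncard_singleton]
        · simp only [Set.mem_singleton_iff]
          exact fun hWY => hcon.2 hWY.symm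
        · simp only [Set.mem_insert_iff, Set.mem_singleton_iff]
          push_neg
          exact ⟨hUW, fun hUY => hcon.1 hUY.symm⟩
      have hle := Set.ncard_le_ncard hsub (Set.toFinite _)
      rw [h3] at hle
      omega
    obtain ⟨u₀, hu₀⟩ := hUmop.1
    obtain ⟨w₀, hw₀⟩ := hWmop.1
    refine ⟨fun x y => x ≠ y ∧ ¬ G.Adj x y ∧
      ∃ P, IsMinimalSeparator G P ∧ MR G P x u₀ ∧ MR G P y w₀, ?_, ?_, ?_⟩
    · rintro x y z ⟨hxy, hnxy, P, hP, hxP, hyP⟩ ⟨hyz, hnyz, P', hP', hyP', hzP'⟩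
      obtain ⟨Q, hQ, hxQ, hzQ⟩ := trans_step honly hUW hu₀ hw₀ hP hP' hxP hyP hyP' hzP'
      obtain ⟨hg1, hg2, hg3, hg4⟩ := sep_struct honly hUW hu₀ hw₀ hQ
      refine ⟨?_, ?_, Q, hQ, hxQ, hzQ⟩
      · rintro rfl
        exact hg2 (hxQ.symm.trans hzQ)
      · intro hadj
        exact hg2 (hxQ.symm.trans ((MR.of_adj hadj hxQ.1 hzQ.1).trans hzQ))
    · rintro x y ⟨hxy, hnadj, -⟩
      exact ⟨hxy, hnadj⟩
    · intro x y hxy hnadj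
      obtain ⟨P, hPpair⟩ := exists_minSep_pair hxy hnadj
      have hPmin : IsMinimalSeparator G P := ⟨x, y, hxy, hPpair⟩
      have hPsep := isSeparator_iff.1 hPpair.1
      obtain ⟨hg1, hg2, hg3, hg4⟩ := sep_struct honly hUW hu₀ hw₀ hPmin
      have hxside := hg3 x hPsep.2.1
      have hyside := hg3 y hPsep.2.2.1
      constructor
      · rintro ⟨-, -, P1, hP1, hx1, hy1⟩ ⟨-, -, P2, hP2, hy2, hx2⟩
        exact no_conflict honly hUW hu₀ hw₀ hP1 hP2 hx1 hy1 hy2 hx2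
      · intro hnr
        rcases hxside with hxu | hxw
        · rcases hyside with hyu | hyw
          · exact absurd (hxu.trans hyu.symm) hPsep.2.2.2
          · exact ⟨hxy, hnadj, P, hPmin, hxu, hyw⟩
        · rcases hyside with hyu | hyw
          · exact absurd ⟨hxy.symm, fun hadj => hnadj hadj.symm, P, hPmin, hyu, hxw⟩ hnr
          · exact absurd (hxw.trans hyw.symm) hPsep.2.2.2

end MoplexPaper
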